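/- arXiv:0812.0314 — 4 statements merged into one kernel-verified Lean document; each statement's English description precedes it below -/
import Mathlib

section
/- For a locally injective holomorphic function f on a domain D in ℂ, the Schwarzian derivative S_f := (f''/f')' - (1/2)(f''/f')² vanishes identically on an open connected set if and only if f is the restriction of a Möbius transformation. -/
open Metric Set Filter Topology

noncomputable def schwarzian (f : ℂ → ℂ) : ℂ → ℂ := fun z =>
  deriv (fun w => deriv (deriv f) w / deriv f w) z
    - (1/2) * (deriv (deriv f) z / deriv f z) ^ 2

lemma const_on_ball {F : ℂ → ℂ} {z₁ : ℂ} {r : ℝ}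
    (hF : ∀ w ∈ ball z₁ r, HasDerivAt F 0 w) {w : ℂ} (hw : w ∈ ball z₁ r)
    (hr : 0 < r) : F w = F z₁ := by
  refine (convex_ball z₁ r).is_const_of_fderivWithin_eq_zero
    (fun x hx => ((hF x hx).differentiableAt).differentiableWithinAt)
    (fun x hx => ?_) hw (mem_ball_self hr)
  have h0 : HasFDerivAt F (0 : ℂ →L[ℂ] ℂ) x := by
    have h := (hF x hx).hasFDerivAt
    have : ContinuousLinearMap.toSpanSingleton ℂ (0:ℂ) = 0 := by
      ext; simp
    rwa [this] at h
  rw [fderivWithin_of_isOpen isOpen_ball hx]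
  exact h0.fderiv

lemma mobius_glob {D : Set ℂ} (hD : IsOpen D) (hDconn : IsConnected D) {f : ℂ → ℂ}
    (hf : DifferentiableOn ℂ f D) {a b c d : ℂ} (hdet : a * d - b * c ≠ 0)
    {z₁ : ℂ} {r : ℝ} (hz₁ : z₁ ∈ D) (hr : 0 < r) (hball : ball z₁ r ⊆ D)
    (heq : ∀ w ∈ ball z₁ r, f w * (c * w + d) = a * w + b) :
    ∀ z ∈ D, f z = (a * z + b) / (c * z + d) := by
  have hGa : AnalyticOnNhd ℂ (fun z => f z * (c * z + d) - (a * z + b)) D := by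
    intro z hz
    exact (((hf.analyticOnNhd hD) z hz).mul
      ((analyticAt_const.mul analyticAt_id).add analyticAt_const)).sub
      ((analyticAt_const.mul analyticAt_id).add analyticAt_const)
  have hzero : EqOn (fun z => f z * (c * z + d) - (a * z + b)) (fun _ => (0:ℂ)) D := by
    apply hGa.eqOn_of_preconnected_of_eventuallyEq (fun z _ => analyticAt_const)
      hDconn.isPreconnected hz₁
    exact eventually_of_mem (ball_mem_nhds z₁ hr) fun w hw => sub_eq_zero.mpr (heq w hw)
  intro z hz
  have hG : f z * (c * z + d) = a * z + b := sub_eq_zero.mp (hzero hz)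
  have hden : c * z + d ≠ 0 := by
    intro h0
    have hab : a * z + b = 0 := by rw [← hG, h0, mul_zero]
    exact hdet (by linear_combination a * h0 - c * hab)
  exact (eq_div_iff hden).mpr hG

lemma schwarzian_forward {D : Set ℂ} (hD : IsOpen D)
    (hDconn : IsConnected D) {f : ℂ → ℂ}
    (hf : DifferentiableOn ℂ f D) (hf' : ∀ z ∈ D, deriv f z ≠ 0)
    (hS : ∀ z ∈ D, schwarzian f z = 0) :
    ∃ a b c d : ℂ, a * d - b * c ≠ 0 ∧
      ∀ z ∈ D, f z = (a * z + b) / (c * z + d) := by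
  have hfa : AnalyticOnNhd ℂ f D := hf.analyticOnNhd hD
  have hf1a : AnalyticOnNhd ℂ (deriv f) D := hfa.deriv
  have hf2a : AnalyticOnNhd ℂ (deriv (deriv f)) D := hf1a.deriv
  by_cases hA : ∀ w ∈ D, deriv (deriv f) w = 0
  · -- affine case
    obtain ⟨z₀, hz₀⟩ := hDconn.nonempty
    obtain ⟨r, hr, hball⟩ := Metric.isOpen_iff.mp hD z₀ hz₀
    have hm0 : deriv f z₀ ≠ 0 := hf' z₀ hz₀
    have hconst1 : ∀ w ∈ ball z₀ r, deriv f w = deriv f z₀ := by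
      intro w hw
      refine const_on_ball (fun x hx => ?_) hw hr
      have h := (hf1a x (hball hx)).differentiableAt.hasDerivAt
      rwa [hA x (hball hx)] at h
    have hconst2 : ∀ w ∈ ball z₀ r,
        f w - deriv f z₀ * w = f z₀ - deriv f z₀ * z₀ := by
      intro w hw
      refine const_on_ball (F := fun y => f y - deriv f z₀ * y) (fun x hx => ?_) hw hr
      have h1 : HasDerivAt f (deriv f x) x := (hfa x (hball hx)).differentiableAt.hasDerivAt
      have h2 : HasDerivAt (fun y : ℂ => deriv f z₀ * y) (deriv f z₀) x := by
        simpa using (hasDerivAt_id x).const_mul (deriv f z₀)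
      have h3 := h1.sub h2
      rwa [hconst1 x hx, sub_self] at h3
    have hdet2 : deriv f z₀ * 1 - (f z₀ - deriv f z₀ * z₀) * 0 ≠ 0 := by simpa using hm0
    exact ⟨deriv f z₀, f z₀ - deriv f z₀ * z₀, 0, 1, hdet2,
      mobius_glob hD hDconn hf hdet2 hz₀ hr hball
        (fun w hw => by linear_combination hconst2 w hw)⟩
  · push_neg at hA
    obtain ⟨z₁, hz₁D, hz₁⟩ := hA
    have hUopen : IsOpen (D ∩ (fun w => deriv (deriv f) w) ⁻¹' {(0:ℂ)}ᶜ) :=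
      hf2a.continuousOn.isOpen_inter_preimage hD isOpen_compl_singleton
    obtain ⟨r, hr, hball⟩ := Metric.isOpen_iff.mp hUopen z₁ ⟨hz₁D, hz₁⟩
    have hbD : ball z₁ r ⊆ D := fun w hw => (hball hw).1
    have hgd : ∀ w ∈ D,
        DifferentiableAt ℂ (fun w => deriv (deriv f) w / deriv f w) w := fun w hw =>
      ((hf2a w hw).differentiableAt).div ((hf1a w hw).differentiableAt) (hf' w hw)
    have hg' : ∀ w ∈ D, deriv (fun w => deriv (deriv f) w / deriv f w) w
        = (1/2) * (deriv (deriv f) w / deriv f w)^2 := by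
      intro w hw
      have h := hS w hw
      unfold schwarzian at h
      rw [sub_eq_zero] at h
      exact h
    have hgball : ∀ w ∈ ball z₁ r, deriv (deriv f) w / deriv f w ≠ 0 := fun w hw =>
      div_ne_zero (hball hw).2 (hf' w (hbD hw))
    have hgder : ∀ w ∈ D, HasDerivAt (fun w => deriv (deriv f) w / deriv f w)
        ((1/2) * (deriv (deriv f) w / deriv f w)^2) w := by
      intro w hw
      have h := (hgd w hw).hasDerivAt
      rwa [hg' w hw] at h
    have hu : ∀ w ∈ ball z₁ r, (deriv (deriv f) w / deriv f w)⁻¹ + (1/2) * w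
        = (deriv (deriv f) z₁ / deriv f z₁)⁻¹ + (1/2) * z₁ := by
      intro w hw
      refine const_on_ball (F := fun y => (deriv (deriv f) y / deriv f y)⁻¹ + (1/2) * y)
        (fun x hx => ?_) hw hr
      have h1 := (hgder x (hbD hx)).inv (hgball x hx)
      have h2 : HasDerivAt (fun y : ℂ => (1/2) * y) (1/2) x := by
        simpa using (hasDerivAt_id x).const_mul (1/2 : ℂ)
      have h3 := h1.add h2
      refine h3.congr_deriv (Eq.symm ?_)
      have ha : deriv (deriv f) x ≠ 0 := (hball hx).2
      have hb : deriv f x ≠ 0 := hf' x (hbD hx)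
      field_simp
      ring
    obtain ⟨k, hk⟩ : ∃ k : ℂ, k = (deriv (deriv f) z₁ / deriv f z₁)⁻¹ + (1/2) * z₁ := ⟨_, rfl⟩
    rw [← hk] at hu
    have hkne : ∀ w ∈ ball z₁ r, k - (1/2) * w ≠ 0 := by
      intro w hw
      have h : (deriv (deriv f) w / deriv f w)⁻¹ = k - (1/2) * w := by
        linear_combination hu w hw
      rw [← h]
      exact inv_ne_zero (hgball w hw)
    have hgeq : ∀ w ∈ ball z₁ r, deriv (deriv f) w / deriv f w = (k - (1/2) * w)⁻¹ := by
      intro w hw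
      have h : (deriv (deriv f) w / deriv f w)⁻¹ = k - (1/2) * w := by
        linear_combination hu w hw
      rw [← h, inv_inv]
    obtain ⟨q, hq⟩ : ∃ q : ℂ, q = 2 * k := ⟨_, rfl⟩
    have hwq : ∀ w ∈ ball z₁ r, w - q ≠ 0 := by
      intro w hw h0
      rw [hq] at h0
      exact hkne w hw (by linear_combination (-(1:ℂ)/2) * h0)
    obtain ⟨K, hK⟩ : ∃ K : ℂ, K = deriv f z₁ * (z₁ - q)^2 := ⟨_, rfl⟩
    have hK0 : K ≠ 0 := by
      rw [hK]
      exact mul_ne_zero (hf' z₁ hz₁D) (pow_ne_zero 2 (hwq z₁ (mem_ball_self hr)))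
    have hp : ∀ w ∈ ball z₁ r, deriv f w * (w - q)^2 = K := by
      intro w hw
      rw [hK]
      refine const_on_ball (F := fun y => deriv f y * (y - q)^2) (fun x hx => ?_) hw hr
      have h1 : HasDerivAt (deriv f) (deriv (deriv f) x) x :=
        (hf1a x (hbD hx)).differentiableAt.hasDerivAt
      have h2 : HasDerivAt (fun y : ℂ => (y - q)^2) (2 * (x - q)^1 * 1) x :=
        ((hasDerivAt_id x).sub_const q).pow 2
      have h3 := h1.mul h2
      refine h3.congr_deriv (Eq.symm ?_)
      have hf2x : deriv (deriv f) x = (deriv (deriv f) x / deriv f x) * deriv f x :=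
        ((div_eq_iff (hf' x (hbD hx))).mp rfl)
      have h4 := hkne x hx
      have hb : deriv f x ≠ 0 := hf' x (hbD hx)
      have h5 : -x + k * 2 ≠ 0 := by
        have h6 := hwq x hx
        rw [hq] at h6
        intro hcon
        exact h6 (by linear_combination -hcon)
      rw [hf2x, hgeq x hx, hq]
      field_simp [h5]
      have hinv : (-x + k*2) * (-x + k*2)⁻¹ = 1 := mul_inv_cancel₀ h5
      linear_combination (2 * deriv f x * (x - 2*k)) * hinv
    obtain ⟨e₀, he⟩ : ∃ e : ℂ, e = f z₁ + K * (z₁ - q)⁻¹ := ⟨_, rfl⟩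
    have hF : ∀ w ∈ ball z₁ r, f w + K * (w - q)⁻¹ = e₀ := by
      intro w hw
      rw [he]
      refine const_on_ball (F := fun y => f y + K * (y - q)⁻¹) (fun x hx => ?_) hw hr
      have h1 : HasDerivAt f (deriv f x) x := (hfa x (hbD hx)).differentiableAt.hasDerivAt
      have h2 : HasDerivAt (fun y : ℂ => (y - q)⁻¹) (-1 / (x - q)^2) x := by
        have h := ((hasDerivAt_id x).sub_const q).inv (hwq x hx)
        simp at h
        exact h
      have h3 := h1.add (h2.const_mul K)
      refine h3.congr_deriv (Eq.symm ?_)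
      have h4 := hwq x hx
      rw [← hp x hx]
      field_simp
      ring
    have hdet2 : e₀ * (-q) - (-(e₀*q) - K) * 1 ≠ 0 := by
      intro h
      exact hK0 (by linear_combination h)
    refine ⟨e₀, -(e₀*q) - K, 1, -q, hdet2,
      mobius_glob hD hDconn hf hdet2 hz₁D hr hbD ?_⟩
    intro w hw
    have hfw : f w = e₀ - K * (w - q)⁻¹ := by linear_combination hF w hw
    have h2 := hwq w hw
    rw [hfw]
    field_simp
    ring

lemma mobius_den_ne_zero {D : Set ℂ} (hD : IsOpen D) {f : ℂ → ℂ}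
    (hf : DifferentiableOn ℂ f D) {a b c d : ℂ} (hdet : a * d - b * c ≠ 0)
    (heq : ∀ z ∈ D, f z = (a * z + b) / (c * z + d)) :
    ∀ z ∈ D, c * z + d ≠ 0 := by
  intro w hw h0
  have hc : c ≠ 0 := by
    rintro rfl
    rw [zero_mul, zero_add] at h0
    exact hdet (by rw [h0]; ring)
  -- on D \ {w}, the denominator is nonzero
  have hne : ∀ z ∈ D \ {w}, c * z + d ≠ 0 := by
    rintro z ⟨_, hzw⟩ hz0
    apply hzw
    have : c * (z - w) = 0 := by linear_combination hz0 - h0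
    have := mul_eq_zero.mp this
    rcases this with h | h
    · exact absurd h hc
    · exact sub_eq_zero.mp h
  -- limit argument
  have hNB : (𝓝[D \ {w}] w).NeBot := by
    rw [diff_eq, inter_comm]
    rw [nhdsWithin_inter_of_mem' (mem_nhdsWithin_of_mem_nhds (hD.mem_nhds hw))]
    exact Module.punctured_nhds_neBot ℝ ℂ w
  have hcont : ContinuousWithinAt (fun z => f z * (c * z + d)) (D \ {w}) w :=
    (((hf w hw).continuousWithinAt.mono diff_subset).mul ((continuous_const.mul continuous_id).add continuous_const).continuousWithinAt)
  have h1 : Tendsto (fun z => f z * (c * z + d)) (𝓝[D \ {w}] w) (𝓝 (f w * (c * w + d))) :=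
    hcont
  have h2 : Tendsto (fun z => f z * (c * z + d)) (𝓝[D \ {w}] w) (𝓝 (a * w + b)) := by
    have hcont2 : Tendsto (fun z : ℂ => a * z + b) (𝓝[D \ {w}] w) (𝓝 (a * w + b)) := by
      apply Tendsto.mono_left ((continuous_const.mul continuous_id).add continuous_const : Continuous (fun z : ℂ => a * z + b)).continuousAt
      exact nhdsWithin_le_nhds
    refine hcont2.congr' ?_
    filter_upwards [self_mem_nhdsWithin] with z hz
    rw [heq z hz.1, div_mul_cancel₀ _ (hne z hz)]
  have hlim : f w * (c * w + d) = a * w + b := tendsto_nhds_unique h1 h2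
  rw [h0, mul_zero] at hlim
  exact hdet (by linear_combination a * h0 + c * hlim)

lemma schwarzian_mobius {D : Set ℂ} (hD : IsOpen D) {f : ℂ → ℂ}
    {a b c d : ℂ} (hdet : a * d - b * c ≠ 0)
    (heq : ∀ z ∈ D, f z = (a * z + b) / (c * z + d))
    (hden : ∀ z ∈ D, c * z + d ≠ 0) :
    ∀ z ∈ D, schwarzian f z = 0 := by
  set N := a * d - b * c with hN
  have haff : ∀ z : ℂ, HasDerivAt (fun w : ℂ => c * w + d) c z := by
    intro z
    simpa using ((hasDerivAt_id z).const_mul c).add_const d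
  have hM1 : ∀ z : ℂ, c * z + d ≠ 0 →
      HasDerivAt (fun w => (a * w + b) / (c * w + d)) (N * ((c * z + d) ^ 2)⁻¹) z := by
    intro z hz
    have h1 : HasDerivAt (fun w : ℂ => a * w + b) a z := by
      simpa using ((hasDerivAt_id z).const_mul a).add_const b
    have := h1.div (haff z) hz
    refine this.congr_deriv (Eq.symm ?_)
    field_simp [hN]
    ring
  have hM2 : ∀ z : ℂ, c * z + d ≠ 0 →
      HasDerivAt (fun w => N * ((c * w + d) ^ 2)⁻¹) (-2 * c * N * ((c * z + d) ^ 3)⁻¹) z := by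
    intro z hz
    have hpow : HasDerivAt (fun w : ℂ => (c * w + d) ^ 2) (2 * (c * z + d) ^ 1 * c) z :=
      (haff z).pow 2
    have hinv := hpow.inv (pow_ne_zero 2 hz)
    have := hinv.const_mul N
    refine this.congr_deriv (Eq.symm ?_)
    field_simp
  have hR : ∀ z : ℂ, c * z + d ≠ 0 →
      HasDerivAt (fun w => -2 * c * ((c * w + d))⁻¹) (2 * c ^ 2 * ((c * z + d) ^ 2)⁻¹) z := by
    intro z hz
    have hinv := (haff z).inv hz
    have := hinv.const_mul (-2 * c)
    refine this.congr_deriv (Eq.symm ?_)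
    field_simp
  -- derivatives of f on D
  have hd1 : ∀ w ∈ D, deriv f w = N * ((c * w + d) ^ 2)⁻¹ := by
    intro w hw
    have hev : f =ᶠ[𝓝 w] fun z => (a * z + b) / (c * z + d) :=
      eventually_of_mem (hD.mem_nhds hw) heq
    rw [hev.deriv_eq]
    exact (hM1 w (hden w hw)).deriv
  have hd2 : ∀ w ∈ D, deriv (deriv f) w = -2 * c * N * ((c * w + d) ^ 3)⁻¹ := by
    intro w hw
    have hev : deriv f =ᶠ[𝓝 w] fun z => N * ((c * z + d) ^ 2)⁻¹ :=
      eventually_of_mem (hD.mem_nhds hw) hd1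
    rw [hev.deriv_eq]
    exact (hM2 w (hden w hw)).deriv
  have hq : ∀ w ∈ D, deriv (deriv f) w / deriv f w = -2 * c * ((c * w + d))⁻¹ := by
    intro w hw
    rw [hd1 w hw, hd2 w hw]
    have h1 := hden w hw
    field_simp
  intro z hz
  have hqd : deriv (fun w => deriv (deriv f) w / deriv f w) z
      = 2 * c ^ 2 * ((c * z + d) ^ 2)⁻¹ := by
    have hev : (fun w => deriv (deriv f) w / deriv f w)
        =ᶠ[𝓝 z] fun w => -2 * c * ((c * w + d))⁻¹ :=
      eventually_of_mem (hD.mem_nhds hz) hq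
    rw [hev.deriv_eq]
    exact (hR z (hden z hz)).deriv
  have h1 := hden z hz
  rw [schwarzian, hqd, hq z hz]
  field_simp
  ring


/-- The Schwarzian derivative of a locally injective holomorphic function on a
nonempty open connected set vanishes identically iff `f` is the restriction of a
Möbius transformation. -/
theorem schwarzian_eq_zero_iff_mobius (D : Set ℂ) (hD : IsOpen D)
    (hDconn : IsConnected D) (f : ℂ → ℂ)
    (hf : DifferentiableOn ℂ f D) (hf' : ∀ z ∈ D, deriv f z ≠ 0) :
    (∀ z ∈ D, schwarzian f z = 0) ↔
      ∃ a b c d : ℂ, a * d - b * c ≠ 0 ∧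
        ∀ z ∈ D, f z = (a * z + b) / (c * z + d) := by
  constructor
  · exact fun hS => schwarzian_forward hD hDconn hf hf' hS
  · rintro ⟨a, b, c, d, hdet, heq⟩
    exact schwarzian_mobius hD hdet heq (mobius_den_ne_zero hD hf hdet heq)
end

section
/- For n ≥ 3 and any Möbius transformation g, the A-series higher Schwarzian transforms as σ_n^A[f ∘ g] = (σ_n^A[f] ∘ g)·(g')^{n-1}. -/
noncomputable def sigmaA (f : ℂ → ℂ) : ℕ → ℂ → ℂ
  | 0 => schwarzian f
  | (k+1) => fun z =>
      deriv (sigmaA f k) z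
        - ((k : ℂ) + 2) * (deriv (deriv f) z / deriv f z) * sigmaA f k z

private lemma sigmaA_analytic {D : Set ℂ} (hD : IsOpen D) {f : ℂ → ℂ}
    (hf : DifferentiableOn ℂ f D) (hf' : ∀ z ∈ D, deriv f z ≠ 0) :
    ∀ k, AnalyticOnNhd ℂ (sigmaA f k) D := by
  have hA : AnalyticOnNhd ℂ f D := hf.analyticOnNhd hD
  have hP : AnalyticOnNhd ℂ (fun z => deriv (deriv f) z / deriv f z) D :=
    (hA.deriv.deriv).div hA.deriv hf'
  intro k
  induction k with
  | zero =>
    show AnalyticOnNhd ℂ (schwarzian f) D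
    unfold schwarzian
    exact hP.deriv.sub (analyticOnNhd_const.mul (hP.pow 2))
  | succ k ih =>
    show AnalyticOnNhd ℂ (fun z =>
      deriv (sigmaA f k) z - ((k : ℂ) + 2) * (deriv (deriv f) z / deriv f z) * sigmaA f k z) D
    exact ih.deriv.sub ((analyticOnNhd_const.mul hP).mul ih)

private lemma sigmaA_key (a b c d : ℂ) (habcd : a * d - b * c = 1)
    (g : ℂ → ℂ) (hgdef : ∀ z, g z = (a * z + b) / (c * z + d))
    (D U : Set ℂ) (hD : IsOpen D) (hU : IsOpen U)
    (f : ℂ → ℂ) (hf : DifferentiableOn ℂ f D) (hf' : ∀ z ∈ D, deriv f z ≠ 0)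
    (hUden : ∀ z ∈ U, c * z + d ≠ 0) (hUD : ∀ z ∈ U, g z ∈ D) :
    ∀ k : ℕ, ∀ z ∈ U,
      sigmaA (f ∘ g) k z = sigmaA f k (g z) * (deriv g z) ^ (k + 2) := by
  have hgfun : g = fun z => (a * z + b) / (c * z + d) := funext hgdef
  -- open set where denominator is nonzero
  have hV : IsOpen {z : ℂ | c * z + d ≠ 0} :=
    isOpen_ne_fun (by fun_prop) continuous_const
  -- differentiability of g
  have hgd : ∀ z : ℂ, c * z + d ≠ 0 → DifferentiableAt ℂ g z := by
    intro z hz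
    rw [hgfun]
    exact DifferentiableAt.div (by fun_prop) (by fun_prop) hz
  have hlin : ∀ (u v z : ℂ), HasDerivAt (fun w => u * w + v) u z := by
    intro u v z
    simpa using ((hasDerivAt_id z).const_mul u).add_const v
  -- derivative of g
  have hdgH : ∀ z : ℂ, c * z + d ≠ 0 → HasDerivAt g (((c * z + d) ^ 2)⁻¹) z := by
    intro z hz
    have h := (hlin a b z).div (hlin c d z) hz
    have he : (a * (c * z + d) - (a * z + b) * c) / (c * z + d) ^ 2 = ((c * z + d) ^ 2)⁻¹ := by
      field_simp
      linear_combination habcd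
    rw [he] at h
    rw [hgfun]
    exact h
  have hdg : ∀ z : ℂ, c * z + d ≠ 0 → deriv g z = ((c * z + d) ^ 2)⁻¹ := by
    intro z hz
    exact (hdgH z hz).deriv
  have hdg_ne : ∀ z : ℂ, c * z + d ≠ 0 → deriv g z ≠ 0 := by
    intro z hz
    rw [hdg z hz]
    exact inv_ne_zero (pow_ne_zero 2 hz)
  -- second derivative of g
  have hdgEq : Set.EqOn (deriv g) (fun w => ((c * w + d) ^ 2)⁻¹) {z : ℂ | c * z + d ≠ 0} :=
    fun z hz => hdg z hz
  have hG1 : ∀ z : ℂ, c * z + d ≠ 0 →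
      HasDerivAt (fun w : ℂ => ((c * w + d) ^ 2)⁻¹) ((-2 * c / (c * z + d)) * ((c * z + d) ^ 2)⁻¹) z := by
    intro z hz
    have h1 : HasDerivAt (fun w : ℂ => (c * w + d) ^ 2) (2 * (c * z + d) * c) z := by
      simpa using ((hlin c d z).fun_pow 2)
    have h2 := h1.inv (pow_ne_zero 2 hz)
    have he : -(2 * (c * z + d) * c) / ((c * z + d) ^ 2) ^ 2
        = (-2 * c / (c * z + d)) * ((c * z + d) ^ 2)⁻¹ := by
      field_simp
    rw [he] at h2
    exact h2
  have hdg_diff : ∀ z : ℂ, c * z + d ≠ 0 → DifferentiableAt ℂ (deriv g) z := by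
    intro z hz
    have hev := hdgEq.eventuallyEq_of_mem (hV.mem_nhds hz)
    exact (Filter.EventuallyEq.differentiableAt_iff hev).mpr (hG1 z hz).differentiableAt
  have hddg : ∀ z : ℂ, c * z + d ≠ 0 →
      deriv (deriv g) z = (-2 * c / (c * z + d)) * deriv g z := by
    intro z hz
    have hev := hdgEq.eventuallyEq_of_mem (hV.mem_nhds hz)
    rw [hev.deriv_eq, (hG1 z hz).deriv, hdg z hz]
  -- facts about f
  have hA : AnalyticOnNhd ℂ f D := hf.analyticOnNhd hD
  have hPan : AnalyticOnNhd ℂ (fun w => deriv (deriv f) w / deriv f w) D :=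
    (hA.deriv.deriv).div hA.deriv hf'
  have hsig : ∀ k, AnalyticOnNhd ℂ (sigmaA f k) D := sigmaA_analytic hD hf hf'
  -- chain rule helper
  have hcomp : ∀ (φ : ℂ → ℂ) (z : ℂ), DifferentiableAt ℂ φ (g z) → c * z + d ≠ 0 →
      deriv (fun w => φ (g w)) z = deriv φ (g z) * deriv g z := by
    intro φ z hφ hz
    exact deriv_comp z hφ (hgd z hz)
  -- first derivative of f ∘ g on U
  have hd1 : ∀ z ∈ U, deriv (f ∘ g) z = deriv f (g z) * deriv g z := by
    intro z hz
    exact deriv_comp z ((hA (g z) (hUD z hz)).differentiableAt) (hgd z (hUden z hz))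
  -- second derivative of f ∘ g on U
  have hd2 : ∀ z ∈ U, deriv (deriv (f ∘ g)) z
      = deriv (deriv f) (g z) * deriv g z * deriv g z + deriv f (g z) * deriv (deriv g) z := by
    intro z hz
    have he : deriv (f ∘ g) =ᶠ[nhds z] fun w => deriv f (g w) * deriv g w :=
      Filter.eventuallyEq_of_mem (hU.mem_nhds hz) (fun w hw => hd1 w hw)
    rw [he.deriv_eq]
    have hdf_g : DifferentiableAt ℂ (fun w => deriv f (g w)) z :=
      ((hA.deriv (g z) (hUD z hz)).differentiableAt).comp z (hgd z (hUden z hz))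
    rw [deriv_fun_mul hdf_g (hdg_diff z (hUden z hz))]
    rw [hcomp (deriv f) z ((hA.deriv (g z) (hUD z hz)).differentiableAt) (hUden z hz)]
  -- pre-Schwarzian transformation law
  have hPc : ∀ z ∈ U, deriv (deriv (f ∘ g)) z / deriv (f ∘ g) z
      = (deriv (deriv f) (g z) / deriv f (g z)) * deriv g z + (-2 * c / (c * z + d)) := by
    intro z hz
    have h1 : deriv f (g z) ≠ 0 := hf' _ (hUD z hz)
    have h2 : c * z + d ≠ 0 := hUden z hz
    rw [hd2 z hz, hd1 z hz, hddg z h2, hdg z h2]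
    obtain ⟨q, hqd⟩ : ∃ q, q = c * z + d := ⟨_, rfl⟩
    rw [← hqd] at h2 ⊢
    field_simp [h1, h2]
  intro k
  induction k with
  | zero =>
    intro z hz
    have hq : c * z + d ≠ 0 := hUden z hz
    have hw : g z ∈ D := hUD z hz
    have h1 : deriv f (g z) ≠ 0 := hf' _ hw
    show schwarzian (f ∘ g) z = schwarzian f (g z) * deriv g z ^ (0 + 2)
    unfold schwarzian
    have hPE : (fun w => deriv (deriv (f ∘ g)) w / deriv (f ∘ g) w) =ᶠ[nhds z]
        (fun w => deriv (deriv f) (g w) / deriv f (g w) * deriv g w + -2 * c / (c * w + d)) :=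
      Filter.eventuallyEq_of_mem (hU.mem_nhds hz) (fun w hw' => hPc w hw')
    rw [hPE.deriv_eq]
    have hPf_d : DifferentiableAt ℂ (fun w => deriv (deriv f) w / deriv f w) (g z) :=
      (hPan (g z) hw).differentiableAt
    have hPfg : DifferentiableAt ℂ (fun w => deriv (deriv f) (g w) / deriv f (g w)) z :=
      hPf_d.comp z (hgd z hq)
    have hrd : HasDerivAt (fun w : ℂ => -2 * c / (c * w + d)) (2 * c ^ 2 * ((c * z + d) ^ 2)⁻¹) z := by
      have h2 := ((hlin c d z).inv hq).const_mul (-2 * c)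
      have he : -2 * c * (-c / (c * z + d) ^ 2) = 2 * c ^ 2 * ((c * z + d) ^ 2)⁻¹ := by
        field_simp
      rw [he] at h2
      simpa [div_eq_mul_inv] using h2
    rw [deriv_fun_add (hPfg.fun_mul (hdg_diff z hq)) hrd.differentiableAt]
    rw [deriv_fun_mul hPfg (hdg_diff z hq)]
    rw [show deriv (fun w => deriv (deriv f) (g w) / deriv f (g w)) z
        = deriv (fun w => deriv (deriv f) w / deriv f w) (g z) * deriv g z from
      deriv_comp z hPf_d (hgd z hq)]
    rw [hrd.deriv, hddg z hq, hPc z hz, hdg z hq]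
    obtain ⟨q, hqd⟩ : ∃ q, q = c * z + d := ⟨_, rfl⟩
    rw [← hqd]
    ring
  | succ k ih =>
    intro z hz
    have hq : c * z + d ≠ 0 := hUden z hz
    have hw : g z ∈ D := hUD z hz
    have h1 : deriv f (g z) ≠ 0 := hf' _ hw
    show deriv (sigmaA (f ∘ g) k) z
        - ((k : ℂ) + 2) * (deriv (deriv (f ∘ g)) z / deriv (f ∘ g) z) * sigmaA (f ∘ g) k z
      = (deriv (sigmaA f k) (g z)
          - ((k : ℂ) + 2) * (deriv (deriv f) (g z) / deriv f (g z)) * sigmaA f k (g z))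
        * deriv g z ^ (k + 1 + 2)
    have hEk : sigmaA (f ∘ g) k =ᶠ[nhds z] fun w => sigmaA f k (g w) * deriv g w ^ (k + 2) :=
      Filter.eventuallyEq_of_mem (hU.mem_nhds hz) (fun w hw' => ih w hw')
    rw [hEk.deriv_eq]
    have hsk : DifferentiableAt ℂ (sigmaA f k) (g z) := (hsig k (g z) hw).differentiableAt
    have hskg : DifferentiableAt ℂ (fun w => sigmaA f k (g w)) z := hsk.comp z (hgd z hq)
    rw [deriv_fun_mul hskg ((hdg_diff z hq).fun_pow (k + 2))]
    rw [deriv_fun_pow (hdg_diff z hq) (k + 2)]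
    rw [show deriv (fun w => sigmaA f k (g w)) z = deriv (sigmaA f k) (g z) * deriv g z from
      deriv_comp z hsk (hgd z hq)]
    rw [hddg z hq, hPc z hz, ih z hz]
    have hexp : k + 2 - 1 = k + 1 := rfl
    rw [hexp]
    push_cast
    ring

/-- For `n ≥ 3` and a Möbius transformation `g`, the A-series higher Schwarzian
transforms as `σ_n^A[f ∘ g] = (σ_n^A[f] ∘ g)·(g')^{n-1}`. -/
theorem sigmaA_comp_mobius (a b c d : ℂ) (habcd : a * d - b * c = 1)
    (g : ℂ → ℂ) (hgdef : ∀ z, g z = (a * z + b) / (c * z + d))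
    (D U : Set ℂ) (hD : IsOpen D) (hU : IsOpen U)
    (f : ℂ → ℂ) (hf : DifferentiableOn ℂ f D) (hf' : ∀ z ∈ D, deriv f z ≠ 0)
    (hUden : ∀ z ∈ U, c * z + d ≠ 0) (hUD : ∀ z ∈ U, g z ∈ D) :
    ∀ n : ℕ, 3 ≤ n → ∀ z ∈ U,
      sigmaA (f ∘ g) (n - 3) z
        = sigmaA f (n - 3) (g z) * (deriv g z) ^ (n - 1) := by
  intro n hn z hz
  have h2 : n - 3 + 2 = n - 1 := by omega
  rw [← h2]
  exact sigmaA_key a b c d habcd g hgdef D U hD hU f hf hf' hUden hUD (n - 3) z hz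
end

section
/- A holomorphic locally injective function f on a simply connected domain satisfies σ_n^A[f] ≡ 0 if and only if the Schwarzian derivative of its local inverse is (locally) a polynomial of degree at most n - 4. -/
open Polynomial Set Filter

lemma eqOn_deriv_of_isOpen {U : Set ℂ} (hU : IsOpen U) {a b : ℂ → ℂ}
    (h : Set.EqOn a b U) : Set.EqOn (deriv a) (deriv b) U := fun _ hz =>
  Filter.EventuallyEq.deriv_eq (Filter.eventuallyEq_of_mem (hU.mem_nhds hz) h)

lemma eqOn_iteratedDeriv_of_isOpen {U : Set ℂ} (hU : IsOpen U) {a b : ℂ → ℂ}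
    (h : Set.EqOn a b U) (k : ℕ) :
    Set.EqOn (iteratedDeriv k a) (iteratedDeriv k b) U := by
  induction k with
  | zero => simpa [iteratedDeriv_zero] using h
  | succ k ih => rw [iteratedDeriv_succ, iteratedDeriv_succ]; exact eqOn_deriv_of_isOpen hU ih

lemma iteratedDeriv_polyEval (P : Polynomial ℂ) (k : ℕ) :
    iteratedDeriv k (fun x => P.eval x) = fun x => (Polynomial.derivative^[k] P).eval x := by
  induction k generalizing P with
  | zero => simp [iteratedDeriv_zero]
  | succ k ih =>
      rw [iteratedDeriv_succ']
      have hd : deriv (fun x => P.eval x) = fun x => (Polynomial.derivative P).eval x := by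
        funext x; exact P.deriv
      rw [hd, ih, Function.iterate_succ_apply]

lemma exists_antideriv (P : Polynomial ℂ) (m : ℕ) (hP : P.degree ≤ m) :
    ∃ Q : Polynomial ℂ, Q.degree ≤ (m + 1 : ℕ) ∧ Polynomial.derivative Q = P := by
  refine ⟨∑ i ∈ Finset.range (m + 1), Polynomial.C (P.coeff i / (i + 1)) * Polynomial.X ^ (i + 1),
    ?_, ?_⟩
  · refine le_trans (Polynomial.degree_sum_le _ _) (Finset.sup_le fun i hi => ?_)
    refine le_trans (Polynomial.degree_C_mul_X_pow_le _ _) ?_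
    exact_mod_cast Nat.succ_le_succ (Nat.lt_succ_iff.mp (Finset.mem_range.mp hi))
  · have hPd : P = ∑ i ∈ Finset.range (m + 1), Polynomial.C (P.coeff i) * Polynomial.X ^ i := by
      conv_lhs => rw [Polynomial.as_sum_range' P (m + 1)
        (lt_of_le_of_lt (Polynomial.natDegree_le_iff_degree_le.mpr hP) (Nat.lt_succ_self m))]
      simp [Polynomial.C_mul_X_pow_eq_monomial]
    rw [map_sum]
    conv_rhs => rw [hPd]
    refine Finset.sum_congr rfl fun i _ => ?_
    rw [Polynomial.derivative_C_mul, Polynomial.derivative_X_pow]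
    have h1 : ((i : ℂ) + 1) ≠ 0 := Nat.cast_add_one_ne_zero i
    rw [← mul_assoc, ← Polynomial.C_mul]
    push_cast
    rw [div_mul_cancel₀ _ h1]

lemma eq_const_of_deriv_eq_zero {U : Set ℂ} (hU : IsOpen U) (hUc : IsPreconnected U)
    {r : ℂ → ℂ} (hr : AnalyticOnNhd ℂ r U) (hr' : ∀ w ∈ U, deriv r w = 0)
    {z₀ : ℂ} (hz₀ : z₀ ∈ U) : ∀ w ∈ U, r w = r z₀ := by
  obtain ⟨ε, hε, hball⟩ := Metric.isOpen_iff.mp hU z₀ hz₀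
  have hball_eq : ∀ w ∈ Metric.ball z₀ ε, r w = r z₀ := by
    intro w hw
    refine (convex_ball z₀ ε).is_const_of_fderivWithin_eq_zero
      (fun x hx => ((hr x (hball hx)).differentiableAt).differentiableWithinAt)
      (fun x hx => ?_) hw (Metric.mem_ball_self hε)
    rw [fderivWithin_of_isOpen Metric.isOpen_ball hx, ← toSpanSingleton_deriv, hr' x (hball hx)]
    exact ContinuousLinearMap.ext fun y => by simp
  have heq : Set.EqOn r (fun _ => r z₀) U :=
    hr.eqOn_of_preconnected_of_eventuallyEq analyticOnNhd_const hUc hz₀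
      (Filter.eventuallyEq_of_mem
        (Metric.isOpen_ball.mem_nhds (Metric.mem_ball_self hε)) hball_eq)
  exact fun w hw => heq hw

lemma poly_of_iteratedDeriv_zero {U : Set ℂ} (hU : IsOpen U) (hUc : IsPreconnected U)
    (hne : U.Nonempty) :
    ∀ (m : ℕ) (q : ℂ → ℂ), AnalyticOnNhd ℂ q U → (∀ w ∈ U, iteratedDeriv (m + 1) q w = 0) →
      ∃ P : Polynomial ℂ, P.degree ≤ (m : ℕ) ∧ ∀ w ∈ U, q w = P.eval w := by
  intro m
  induction m with
  | zero =>
      intro q hq h0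
      obtain ⟨z₀, hz₀⟩ := hne
      have hd : ∀ w ∈ U, deriv q w = 0 := by
        intro w hw
        have := h0 w hw
        rwa [iteratedDeriv_one] at this
      refine ⟨Polynomial.C (q z₀), le_trans Polynomial.degree_C_le (by exact_mod_cast Nat.zero_le 0), fun w hw => ?_⟩
      simpa using eq_const_of_deriv_eq_zero hU hUc hq hd hz₀ w hw
  | succ m ih =>
      intro q hq h0
      obtain ⟨z₀, hz₀⟩ := hne
      have h0' : ∀ w ∈ U, iteratedDeriv (m + 1) (deriv q) w = 0 := by
        intro w hw
        rw [← iteratedDeriv_succ']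
        exact h0 w hw
      obtain ⟨P, hPdeg, hPeq⟩ := ih (deriv q) hq.deriv h0'
      obtain ⟨Q, hQdeg, hQder⟩ := exists_antideriv P m hPdeg
      set r : ℂ → ℂ := fun w => q w - Q.eval w with hrdef
      have hrA : AnalyticOnNhd ℂ r U :=
        hq.sub ((Q.differentiable.differentiableOn).analyticOnNhd hU)
      have hr' : ∀ w ∈ U, deriv r w = 0 := by
        intro w hw
        rw [hrdef]
        rw [deriv_fun_sub ((hq w hw).differentiableAt) (Q.differentiableAt),
          Polynomial.deriv, hQder, hPeq w hw, sub_self]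
      have hconst := eq_const_of_deriv_eq_zero hU hUc hrA hr' hz₀
      refine ⟨Q + Polynomial.C (r z₀), ?_, fun w hw => ?_⟩
      · refine le_trans (Polynomial.degree_add_le _ _) (max_le hQdeg ?_)
        exact le_trans Polynomial.degree_C_le (by exact_mod_cast Nat.zero_le (m+1))
      · have := hconst w hw
        simp only [hrdef] at this
        simp only [Polynomial.eval_add, Polynomial.eval_C]
        linear_combination this

lemma iteratedDeriv_zero_iff_poly {U : Set ℂ} (hU : IsOpen U) (hUc : IsPreconnected U)
    (hne : U.Nonempty) (m : ℕ) {q : ℂ → ℂ} (hq : AnalyticOnNhd ℂ q U) :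
    (∀ w ∈ U, iteratedDeriv (m + 1) q w = 0) ↔
      ∃ P : Polynomial ℂ, P.degree ≤ (m : ℕ) ∧ ∀ w ∈ U, q w = P.eval w := by
  constructor
  · exact poly_of_iteratedDeriv_zero hU hUc hne m q hq
  · rintro ⟨P, hPdeg, hPeq⟩ w hw
    have heq := eqOn_iteratedDeriv_of_isOpen hU (fun x hx => hPeq x hx) (m + 1) hw
    rw [heq, iteratedDeriv_polyEval]
    have hzero : Polynomial.derivative^[m + 1] P = 0 :=
      Polynomial.iterate_derivative_eq_zero
        (lt_of_le_of_lt (Polynomial.natDegree_le_iff_degree_le.mpr hPdeg) (Nat.lt_succ_self m))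
    simp [hzero]

/-- For a biholomorphism `f` of a simply connected domain onto its image with
inverse `g` and `n ≥ 4`: `σ_n^A[f] ≡ 0` iff the Schwarzian of the inverse is a
polynomial of degree at most `n - 4`. -/
theorem sigmaA_eq_zero_iff_schwarzian_inv_polynomial (D : Set ℂ) (hD : IsOpen D)
    (hDconn : IsConnected D) (hDsc : SimplyConnectedSpace D)
    (f g : ℂ → ℂ)
    (hf : DifferentiableOn ℂ f D) (hf' : ∀ z ∈ D, deriv f z ≠ 0)
    (hfInj : Set.InjOn f D)
    (hImg : IsOpen (f '' D)) (hg : DifferentiableOn ℂ g (f '' D))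
    (hleft : ∀ z ∈ D, g (f z) = z)
    (n : ℕ) (hn : 4 ≤ n) :
    (∀ z ∈ D, sigmaA f (n - 3) z = 0) ↔
      ∃ P : Polynomial ℂ, P.degree ≤ (n - 4 : ℕ) ∧
        ∀ w ∈ f '' D, schwarzian g w = P.eval w := by
  have hfd : ∀ z ∈ D, DifferentiableAt ℂ f z := fun z hz => hf.differentiableAt (hD.mem_nhds hz)
  have hfA : AnalyticOnNhd ℂ f D := hf.analyticOnNhd hD
  have hgA : AnalyticOnNhd ℂ g (f '' D) := hg.analyticOnNhd hImg
  have hf'A : AnalyticOnNhd ℂ (deriv f) D := hfA.deriv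
  have hf''A : AnalyticOnNhd ℂ (deriv (deriv f)) D := hf'A.deriv
  have hg'A : AnalyticOnNhd ℂ (deriv g) (f '' D) := hgA.deriv
  have hg''A : AnalyticOnNhd ℂ (deriv (deriv g)) (f '' D) := hg'A.deriv
  have hg'''A : AnalyticOnNhd ℂ (deriv (deriv (deriv g))) (f '' D) := hg''A.deriv
  -- chain-rule transfer
  have key : ∀ u v : ℂ → ℂ, (∀ x ∈ D, DifferentiableAt ℂ u (f x)) →
      (∀ x ∈ D, u (f x) = v x) →
      ∀ z ∈ D, deriv u (f z) * deriv f z = deriv v z := by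
    intro u v hud huv z hz
    have h1 : deriv (u ∘ f) z = deriv v z :=
      Filter.EventuallyEq.deriv_eq (Filter.eventuallyEq_of_mem (hD.mem_nhds hz) huv)
    rw [← h1, deriv_comp z (hud z hz) (hfd z hz)]
  have k1 : ∀ z ∈ D, deriv g (f z) * deriv f z = 1 := by
    have := key g id (fun x hx => (hgA _ (mem_image_of_mem f hx)).differentiableAt) hleft
    simpa using this
  have h1 : ∀ z ∈ D, deriv g (f z) = 1 / deriv f z := by
    intro z hz
    rw [eq_div_iff (hf' z hz)]
    exact k1 z hz
  have h2 : ∀ z ∈ D, deriv (deriv g) (f z) = -(deriv (deriv f) z) / (deriv f z) ^ 3 := by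
    intro z hz
    have ha := hf' z hz
    have k2 := key (deriv g) (fun x => 1 / deriv f x)
      (fun x hx => (hg'A _ (mem_image_of_mem f hx)).differentiableAt) h1 z hz
    have hinv : deriv (fun x => 1 / deriv f x) z
        = -(deriv (deriv f) z) / (deriv f z) ^ 2 := by
      have := (((hf'A z hz).differentiableAt.hasDerivAt).fun_inv ha).deriv
      simpa [one_div] using this
    rw [hinv] at k2
    field_simp at k2 ⊢
    linear_combination k2
  have h3 : ∀ z ∈ D, deriv (deriv (deriv g)) (f z)
      = (-(deriv (deriv (deriv f)) z) * deriv f z + 3 * (deriv (deriv f) z) ^ 2)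
        / (deriv f z) ^ 5 := by
    intro z hz
    have ha := hf' z hz
    have k3 := key (deriv (deriv g)) (fun x => -(deriv (deriv f) x) / (deriv f x) ^ 3)
      (fun x hx => (hg''A _ (mem_image_of_mem f hx)).differentiableAt) h2 z hz
    have hdd : deriv (fun x => -(deriv (deriv f) x) / (deriv f x) ^ 3) z
        = ((-(deriv (deriv (deriv f)) z)) * (deriv f z) ^ 3
            - (-(deriv (deriv f) z)) * ((3 : ℕ) * (deriv f z) ^ 2 * deriv (deriv f) z))
          / ((deriv f z) ^ 3) ^ 2 := by
      have hnum : HasDerivAt (fun x => -(deriv (deriv f) x))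
          (-(deriv (deriv (deriv f)) z)) z :=
        ((hf''A z hz).differentiableAt.hasDerivAt).neg
      have hden : HasDerivAt (fun x => (deriv f x) ^ 3)
          ((3 : ℕ) * (deriv f z) ^ 2 * deriv (deriv f) z) z := by
        simpa using ((hf'A z hz).differentiableAt.hasDerivAt).fun_pow 3
      exact (hnum.div hden (pow_ne_zero 3 ha)).deriv
    rw [hdd] at k3
    rw [eq_div_iff (pow_ne_zero 5 ha)]
    field_simp at k3
    linear_combination k3
  -- nonvanishing of deriv g on the image
  have hDg0 : ∀ w ∈ f '' D, deriv g w ≠ 0 := by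
    rintro w ⟨z, hz, rfl⟩
    rw [h1 z hz]
    exact one_div_ne_zero (hf' z hz)
  have hquotg : ∀ w ∈ f '' D, deriv (fun w => deriv (deriv g) w / deriv g w) w
      = (deriv (deriv (deriv g)) w * deriv g w - deriv (deriv g) w * deriv (deriv g) w)
        / (deriv g w) ^ 2 := by
    intro w hw
    exact (((hg''A w hw).differentiableAt.hasDerivAt).div
      ((hg'A w hw).differentiableAt.hasDerivAt) (hDg0 w hw)).deriv
  have hquotf : ∀ z ∈ D, deriv (fun w => deriv (deriv f) w / deriv f w) z
      = (deriv (deriv (deriv f)) z * deriv f z - deriv (deriv f) z * deriv (deriv f) z)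
        / (deriv f z) ^ 2 := by
    intro z hz
    exact (((hf''A z hz).differentiableAt.hasDerivAt).div
      ((hf'A z hz).differentiableAt.hasDerivAt) (hf' z hz)).deriv
  have base : ∀ z ∈ D, schwarzian f z = -(schwarzian g (f z)) * (deriv f z) ^ 2 := by
    intro z hz
    have ha := hf' z hz
    simp only [schwarzian]
    rw [hquotf z hz, hquotg (f z) (mem_image_of_mem f hz), h1 z hz, h2 z hz, h3 z hz]
    field_simp
    ring
  have hsgA : AnalyticOnNhd ℂ (schwarzian g) (f '' D) := by
    have l1 : AnalyticOnNhd ℂ (fun w => deriv (deriv g) w / deriv g w) (f '' D) :=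
      hg''A.div hg'A hDg0
    exact l1.deriv.sub (analyticOnNhd_const.mul (l1.pow 2))
  have hqA : ∀ k, AnalyticOnNhd ℂ (iteratedDeriv k (schwarzian g)) (f '' D) := by
    intro k
    induction k with
    | zero => simpa [iteratedDeriv_zero] using hsgA
    | succ k ih => rw [iteratedDeriv_succ]; exact ih.deriv
  have main : ∀ k, ∀ z ∈ D, sigmaA f k z
      = -(iteratedDeriv k (schwarzian g) (f z)) * (deriv f z) ^ (k + 2) := by
    intro k
    induction k with
    | zero =>
        intro z hz
        simpa [sigmaA, iteratedDeriv_zero] using base z hz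
    | succ k ih =>
        intro z hz
        have ha := hf' z hz
        have hder : deriv (sigmaA f k) z
            = deriv (fun x => -(iteratedDeriv k (schwarzian g) (f x)) * (deriv f x) ^ (k + 2)) z :=
          Filter.EventuallyEq.deriv_eq
            (Filter.eventuallyEq_of_mem (hD.mem_nhds hz) fun x hx => ih x hx)
        have hcomp : HasDerivAt (fun x => iteratedDeriv k (schwarzian g) (f x))
            (deriv (iteratedDeriv k (schwarzian g)) (f z) * deriv f z) z :=
          (((hqA k) (f z) (mem_image_of_mem f hz)).differentiableAt.hasDerivAt).comp z
            ((hfd z hz).hasDerivAt)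
        have hpow : HasDerivAt (fun x => (deriv f x) ^ (k + 2))
            (((k + 2 : ℕ) : ℂ) * (deriv f z) ^ (k + 1) * deriv (deriv f) z) z := by
          simpa using ((hf'A z hz).differentiableAt.hasDerivAt).fun_pow (k + 2)
        have hprod := (hcomp.fun_neg).fun_mul hpow
        show deriv (sigmaA f k) z
            - ((k : ℂ) + 2) * (deriv (deriv f) z / deriv f z) * sigmaA f k z = _
        rw [hder, hprod.deriv, ih z hz, ← iteratedDeriv_succ]
        push_cast
        field_simp
        ring
  -- conclude
  have h43 : n - 3 = (n - 4) + 1 := by omega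
  have hEconn : IsPreconnected (f '' D) :=
    (hDconn.image f hf.continuousOn).isPreconnected
  have hEne : (f '' D).Nonempty := hDconn.nonempty.image f
  have hiff := iteratedDeriv_zero_iff_poly hImg hEconn hEne (n - 4) hsgA
  constructor
  · intro hzero
    refine hiff.mp ?_
    rw [← h43]
    rintro w ⟨z, hz, rfl⟩
    have hm := main (n - 3) z hz
    rw [hzero z hz] at hm
    have hpow : (deriv f z) ^ (n - 3 + 2) ≠ 0 := pow_ne_zero _ (hf' z hz)
    have := (mul_eq_zero.mp hm.symm).resolve_right hpow
    simpa using this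
  · rintro ⟨P, hP1, hP2⟩ z hz
    have hq0 := hiff.mpr ⟨P, hP1, hP2⟩
    rw [main (n - 3) z hz, h43, hq0 (f z) (mem_image_of_mem f hz)]
    simp
end

section
/- For any z₀ ∈ 𝔻 and ν ∈ L^∞(𝔻ᶜ), the linear map D(ν)(z) := ∫_{𝔻ᶜ} ν(η)/(z-η)^{n+1} d²η defines a holomorphic function on 𝔻 satisfying the bound |D(ν)(z)|·(1-|z|²)^{n-1} ≤ 2·4^{n-1}·π/(n-1) · ‖ν‖_∞ for all z ∈ 𝔻; hence ν ↦ D(ν) is a bounded linear operator from L^∞(𝔻ᶜ) to the space B_{n-1}(𝔻) of holomorphic functions with finite hyperbolic sup-norm. -/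
open MeasureTheory Real Set Metric

lemma aux_integrable (p : ℕ) (hp : 3 ≤ p) {δ : ℝ} (hδ : 0 < δ) :
    IntegrableOn (fun η : ℂ => ((‖η‖) ^ p)⁻¹)
      {η : ℂ | δ ≤ ‖η‖} := by
  have hS : MeasurableSet {η : ℂ | δ ≤ ‖η‖} :=
    (isClosed_le continuous_const continuous_norm).measurableSet
  have hfin : ((Module.finrank ℝ ℂ : ℝ)) < (p : ℝ) := by
    rw [Complex.finrank_real_complex]; exact_mod_cast (by omega : 2 < p)
  have hint : Integrable (fun η : ℂ => (1 + 1/δ) ^ p * (1 + ‖η‖) ^ (-(p:ℝ))) :=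
    (integrable_one_add_norm hfin).const_mul _
  refine (hint.restrict).mono' ?_ ?_
  · exact ((continuous_norm.measurable.pow_const p).inv).aestronglyMeasurable
  · refine (ae_restrict_iff' hS).2 (ae_of_all _ fun η hη => ?_)
    have hη' : δ ≤ ‖η‖ := hη
    have habs : ‖η‖ = ‖η‖ := rfl
    have h0 : (0:ℝ) < ‖η‖ := by rw [← habs]; linarith
    have hK : (0:ℝ) < 1 + 1/δ := by positivity
    have hle : 1 + ‖η‖ ≤ (1 + 1/δ) * ‖η‖ := by
      have h1 : (1:ℝ) ≤ ‖η‖ / δ := (one_le_div hδ).2 (by rw [← habs]; exact hη')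
      have h2 : (1:ℝ) ≤ (1/δ) * ‖η‖ := by rw [one_div, inv_mul_eq_div]; exact h1
      nlinarith
    have hpow : (1 + ‖η‖) ^ p ≤ ((1 + 1/δ) * ‖η‖) ^ p :=
      pow_le_pow_left₀ (by positivity) hle p
    rw [mul_pow] at hpow
    have hrw : (1 + ‖η‖) ^ (-(p:ℝ)) = ((1 + ‖η‖) ^ p)⁻¹ := by
      rw [Real.rpow_neg (by positivity), Real.rpow_natCast]
    rw [Real.norm_eq_abs, abs_of_nonneg (by positivity), hrw, habs]
    have h1' : (0:ℝ) < (1 + ‖η‖) ^ p := by positivity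
    have hfin2 : ((1 + 1/δ)^p * ‖η‖^p)⁻¹ ≤ ((1 + ‖η‖)^p)⁻¹ :=
      inv_anti₀ h1' hpow
    calc (‖η‖ ^ p)⁻¹ = (1 + 1/δ)^p * ((1 + 1/δ)^p * ‖η‖^p)⁻¹ := by
          rw [mul_inv, ← mul_assoc, mul_inv_cancel₀ (by positivity), one_mul]
      _ ≤ (1 + 1/δ)^p * ((1 + ‖η‖)^p)⁻¹ :=
          mul_le_mul_of_nonneg_left hfin2 (by positivity)

lemma key_dist {z η : ℂ} {ε : ℝ} (hε : 0 < ε) (hε1 : ε ≤ 1)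
    (hz : ‖z‖ ≤ 1 - ε) (hη : 1 ≤ ‖η‖) :
    ε / 2 * ‖η‖ ≤ ‖z - η‖ := by
  have h1 : ‖η‖ - ‖z‖ ≤ ‖z - η‖ := by
    have := norm_sub_norm_le η z
    rw [norm_sub_rev] at this
    simpa using this
  nlinarith

lemma abs_div_pow_le {C ε : ℝ} (hε : 0 < ε) (p : ℕ) {c a η : ℂ}
    (hc : ‖c‖ ≤ C) (hη : 1 ≤ ‖η‖)
    (ha : ε / 2 * ‖η‖ ≤ ‖a‖) :
    ‖c / a ^ p‖ ≤ C * (2 / ε) ^ p * ((‖η‖) ^ p)⁻¹ := by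
  have hηpos : (0:ℝ) < ‖η‖ := lt_of_lt_of_le one_pos hη
  have hC : 0 ≤ C := le_trans (norm_nonneg _) hc
  have hden : (0:ℝ) < (ε / 2 * ‖η‖) ^ p := by positivity
  rw [norm_div, norm_pow]
  calc ‖c‖ / ‖a‖ ^ p ≤ C / (ε / 2 * ‖η‖) ^ p :=
        div_le_div₀ hC hc hden (pow_le_pow_left₀ (by positivity) ha p)
    _ = C * (2 / ε) ^ p * ((‖η‖) ^ p)⁻¹ := by
        rw [mul_pow, div_pow, div_pow]
        field_simp

lemma tail_integral {δ : ℝ} (hδ : 0 < δ) (n : ℕ) (hn : 2 ≤ n) :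
    ∫ w in {w : ℂ | δ ≤ ‖w‖}, ((‖w‖) ^ (n + 1))⁻¹
      = 2 * π * ((n : ℝ) - 1)⁻¹ * (δ ^ (n - 1))⁻¹ := by
  have hT : MeasurableSet {w : ℂ | δ ≤ ‖w‖} :=
    (isClosed_le continuous_const continuous_norm).measurableSet
  set f : ℝ → ℝ := (Ici δ).indicator (fun r => (r ^ (n + 1))⁻¹) with hf
  have step1 : ∫ w in {w : ℂ | δ ≤ ‖w‖}, ((‖w‖) ^ (n + 1))⁻¹
      = ∫ w : ℂ, f ‖w‖ := by
    rw [← integral_indicator hT]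
    refine integral_congr_ae (Filter.Eventually.of_forall fun w => ?_)
    by_cases h : δ ≤ ‖w‖
    · simp [hf, Set.indicator_apply, Set.mem_Ici, Set.mem_setOf_eq, h]
    · simp [hf, Set.indicator_apply, Set.mem_Ici, Set.mem_setOf_eq, h]
  rw [step1, integral_fun_norm_addHaar (volume : Measure ℂ) f]
  rw [Complex.finrank_real_complex]
  have hball : volume.real (ball (0:ℂ) 1) = π := by
    rw [measureReal_def, Complex.volume_ball]
    simp
  rw [hball]
  have step2 : ∫ y in Ioi (0:ℝ), y ^ (2 - 1) • f y = ∫ y in Ioi δ, y ^ (-(n:ℝ)) := by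
    have he : (fun y : ℝ => y ^ (2 - 1) • f y)
        = (Ici δ).indicator (fun y => y * (y ^ (n + 1))⁻¹) := by
      funext y
      by_cases h : y ∈ Ici δ
      · rw [hf, Set.indicator_of_mem h, Set.indicator_of_mem h]; simp
      · rw [hf, Set.indicator_of_notMem h, Set.indicator_of_notMem h]; simp
    rw [he, setIntegral_indicator measurableSet_Ici,
      Set.inter_eq_self_of_subset_right
        (show Ici δ ⊆ Ioi 0 from fun y hy => lt_of_lt_of_le hδ hy),
      integral_Ici_eq_integral_Ioi]
    refine setIntegral_congr_fun measurableSet_Ioi fun y hy => ?_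
    have hy0 : (0:ℝ) < y := lt_trans hδ hy
    rw [Real.rpow_neg hy0.le, Real.rpow_natCast]
    rw [pow_succ]
    field_simp
  rw [step2, integral_Ioi_rpow_of_lt (by exact_mod_cast (by omega : -(n:ℤ) < -1) ) hδ]
  have hne : -(n:ℝ) + 1 ≠ 0 := by
    have h2 : (2:ℝ) ≤ (n:ℝ) := by exact_mod_cast hn
    intro h; linarith
  have hδpow : δ ^ (-(n:ℝ) + 1) = (δ ^ (n - 1 : ℕ))⁻¹ := by
    rw [← Real.rpow_natCast δ (n - 1), ← Real.rpow_neg hδ.le]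
    congr 1
    rw [Nat.cast_sub (by omega : 1 ≤ n)]
    push_cast
    ring
  simp only [nsmul_eq_mul, smul_eq_mul, hδpow]
  rw [show -(n:ℝ) + 1 = -((n:ℝ) - 1) by ring, neg_div, div_neg, neg_neg, div_eq_mul_inv]
  ring

/-- For `n ≥ 2` and bounded measurable `ν` on `𝔻ᶜ`, the function
`D(ν)(z) = ∫_{𝔻ᶜ} ν(η)/(z-η)^{n+1} d²η` is holomorphic on the unit disc and
satisfies `|D(ν)(z)|·(1-|z|²)^{n-1} ≤ 2·4^{n-1}·π/(n-1)·‖ν‖_∞`; in particular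
`ν ↦ D(ν)` is a bounded linear operator into `B_{n-1}(𝔻)`. -/
theorem higher_bers_differential_bounded (n : ℕ) (hn : 2 ≤ n)
    (ν : ℂ → ℂ) (hmeas : Measurable ν) (C : ℝ)
    (hbound : ∀ η : ℂ, ‖ν η‖ ≤ C) :
    DifferentiableOn ℂ
        (fun z : ℂ => ∫ η in {η : ℂ | 1 ≤ ‖η‖},
          ν η / (z - η) ^ (n + 1)) {z : ℂ | ‖z‖ < 1} ∧
      ∀ z : ℂ, ‖z‖ < 1 →
        ‖∫ η in {η : ℂ | 1 ≤ ‖η‖},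
              ν η / (z - η) ^ (n + 1)‖ * (1 - (‖z‖) ^ 2) ^ (n - 1)
          ≤ 2 * 4 ^ (n - 1) * π / (n - 1) * C := by
  have hS : MeasurableSet {η : ℂ | 1 ≤ ‖η‖} :=
    (isClosed_le continuous_const continuous_norm).measurableSet
  have hC : 0 ≤ C := le_trans (norm_nonneg _) (hbound 0)
  constructor
  · -- differentiability
    intro z₀ hz₀
    have hz₀' : ‖z₀‖ < 1 := hz₀
    have habs0 : 0 ≤ ‖z₀‖ := norm_nonneg z₀
    set ε : ℝ := (1 - ‖z₀‖) / 2 with hεdef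
    have hε0 : 0 < ε := by simp only [hεdef]; linarith
    have hε1 : ε ≤ 1 := by simp only [hεdef]; linarith
    have hz₀'' : ‖z₀‖ ≤ 1 - ε := by simp only [hεdef]; linarith
    have hball : ∀ z ∈ Metric.ball z₀ ε, ‖z‖ ≤ 1 - ε := by
      intro z hz
      have hd : ‖z - z₀‖ < ε := by
        rw [← Complex.dist_eq]; exact hz
      have h1 : ‖z‖ ≤ ‖z - z₀‖ + ‖z₀‖ := by
        have := norm_add_le (z - z₀) z₀
        simpa [sub_add_cancel] using this
      simp only [hεdef] at *
      linarith
    have hmeasF : ∀ z : ℂ, AEStronglyMeasurable (fun η => ν η / (z - η) ^ (n + 1))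
        (volume.restrict {η : ℂ | 1 ≤ ‖η‖}) := fun z =>
      (hmeas.div ((measurable_const.sub measurable_id).pow_const (n + 1))).aestronglyMeasurable
    have key := hasDerivAt_integral_of_dominated_loc_of_deriv_le
      (F := fun z η => ν η / (z - η) ^ (n + 1))
      (F' := fun z η => -((n : ℂ) + 1) * (ν η / (z - η) ^ (n + 2)))
      (x₀ := z₀)
      (bound := fun η => ((n : ℝ) + 1) * (C * (2 / ε) ^ (n + 2) * ((‖η‖) ^ (n + 2))⁻¹))
      (μ := volume.restrict {η : ℂ | 1 ≤ ‖η‖})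
      (Metric.ball_mem_nhds z₀ hε0) (Filter.Eventually.of_forall hmeasF)
      ?_ ?_ ?_ ?_ ?_
    · exact key.2.differentiableAt.differentiableWithinAt
    · -- Integrable (F z₀)
      refine ((aux_integrable (n + 1) (by omega) one_pos).const_mul
        (C * (2 / ε) ^ (n + 1))).mono' (hmeasF z₀) ?_
      refine (ae_restrict_iff' hS).2 (ae_of_all _ fun η hη => ?_)
      exact abs_div_pow_le hε0 (n + 1) (hbound η) hη (key_dist hε0 hε1 hz₀'' hη)
    · -- AESM F' z₀
      exact (measurable_const.mul (hmeas.div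
        ((measurable_const.sub measurable_id).pow_const (n + 2)))).aestronglyMeasurable
    · -- bound on the ball
      refine (ae_restrict_iff' hS).2 (ae_of_all _ fun η hη => ?_)
      intro z hzb
      have hnorm : ‖-((n : ℂ) + 1)‖ = (n : ℝ) + 1 := by
        rw [norm_neg, show ((n : ℂ) + 1) = ((n + 1 : ℕ) : ℂ) by push_cast; ring,
          Complex.norm_natCast]
        push_cast; ring
      rw [norm_mul, hnorm]
      exact mul_le_mul_of_nonneg_left
        (abs_div_pow_le hε0 (n + 2) (hbound η) hη (key_dist hε0 hε1 (hball z hzb) hη))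
        (by positivity)
    · -- bound integrable
      exact ((aux_integrable (n + 2) (by omega) one_pos).const_mul
        (C * (2 / ε) ^ (n + 2))).const_mul ((n : ℝ) + 1)
    · -- differentiability of the integrand
      refine (ae_restrict_iff' hS).2 (ae_of_all _ fun η hη => ?_)
      intro z hzb
      have hpos : (0 : ℝ) < ε / 2 * ‖η‖ := by
        have : (1 : ℝ) ≤ ‖η‖ := hη
        positivity
      have hzη : z - η ≠ 0 := by
        intro h
        have := key_dist hε0 hε1 (hball z hzb) hη
        rw [h] at this
        simp only [norm_zero] at this
        linarith
      have h1 : HasDerivAt (fun w : ℂ => w - η) 1 z := (hasDerivAt_id z).sub_const η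
      have h2 : HasDerivAt (fun w : ℂ => (w - η) ^ (n + 1))
          (((n : ℂ) + 1) * (z - η) ^ n * 1) z := by
        have := h1.fun_pow (n + 1)
        simpa using this
      have h3 := h2.fun_inv (pow_ne_zero _ hzη)
      have h4 := h3.const_mul (ν η)
      have h5 : HasDerivAt (fun w : ℂ => ν η / (w - η) ^ (n + 1))
          (ν η * (-(((n : ℂ) + 1) * (z - η) ^ n * 1) / ((z - η) ^ (n + 1)) ^ 2)) z := by
        simpa only [div_eq_mul_inv] using h4
      convert h5 using 1
      show -((n : ℂ) + 1) * (ν η / (z - η) ^ (n + 2)) = ν η * (-(((n : ℂ) + 1) * (z - η) ^ n * 1) / ((z - η) ^ (n + 1)) ^ 2)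
      field_simp
      ring
      all_goals rfl
  · -- the bound
    intro z hz
    have hz' : ‖z‖ < 1 := hz
    have habs0 : 0 ≤ ‖z‖ := norm_nonneg z
    set δ : ℝ := 1 - ‖z‖ with hδdef
    have hδ : 0 < δ := by simp only [hδdef]; linarith
    have hT : MeasurableSet {w : ℂ | δ ≤ ‖w‖} :=
      (isClosed_le continuous_const continuous_norm).measurableSet
    set g : ℂ → ℝ := ({w : ℂ | δ ≤ ‖w‖}).indicator
      (fun w => ((‖w‖) ^ (n + 1))⁻¹) with hgdef
    have hgint : Integrable g := by
      rw [hgdef, integrable_indicator_iff hT]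
      exact aux_integrable (n + 1) (by omega) hδ
    have hemb : MeasurableEmbedding (fun η : ℂ => z - η) :=
      (Homeomorph.subLeft z).measurableEmbedding
    have hmp : MeasurePreserving (fun η : ℂ => z - η) volume volume :=
      Measure.measurePreserving_sub_left volume z
    have hGint : Integrable (fun η : ℂ => g (z - η)) :=
      (hmp.integrable_comp_emb hemb).2 hgint
    have hmain : ‖∫ η in {η : ℂ | 1 ≤ ‖η‖}, ν η / (z - η) ^ (n + 1)‖
        ≤ C * (2 * π * ((n : ℝ) - 1)⁻¹ * (δ ^ (n - 1))⁻¹) := by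
      refine le_trans (norm_integral_le_integral_norm _) ?_
      have hstep : ∫ η in {η : ℂ | 1 ≤ ‖η‖}, ‖ν η / (z - η) ^ (n + 1)‖
          ≤ ∫ η in {η : ℂ | 1 ≤ ‖η‖}, C * g (z - η) := by
        refine integral_mono_of_nonneg (ae_of_all _ fun η => norm_nonneg _)
          ((hGint.const_mul C).restrict) ?_
        refine (ae_restrict_iff' hS).2 (ae_of_all _ fun η hη => ?_)
        have hη1 : (1 : ℝ) ≤ ‖η‖ := hη
        have hdist : δ ≤ ‖z - η‖ := by
          have h1 : ‖η‖ - ‖z‖ ≤ ‖z - η‖ := by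
            have := norm_sub_norm_le η z
            rw [norm_sub_rev] at this
            simpa using this
          simp only [hδdef]
          linarith
        have hmem : (z - η) ∈ {w : ℂ | δ ≤ ‖w‖} := hdist
        rw [hgdef]
        simp only [Set.indicator_of_mem hmem]
        rw [norm_div, norm_pow, div_eq_mul_inv]
        exact mul_le_mul_of_nonneg_right (hbound η)
          (inv_nonneg.2 (pow_nonneg (norm_nonneg _) _))
      refine le_trans hstep ?_
      have hstep2 : ∫ η in {η : ℂ | 1 ≤ ‖η‖}, C * g (z - η)
          ≤ ∫ η : ℂ, C * g (z - η) := by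
        refine setIntegral_le_integral (hGint.const_mul C) (ae_of_all _ fun η => ?_)
        exact mul_nonneg hC (Set.indicator_nonneg (fun w _ => by positivity) _)
      refine le_trans hstep2 ?_
      rw [integral_const_mul]
      have hcomp : ∫ η : ℂ, g (z - η) = ∫ w : ℂ, g w := hmp.integral_comp hemb g
      rw [hcomp, hgdef, integral_indicator hT, tail_integral hδ n hn]
    have hfac : (1 - (‖z‖) ^ 2) = δ * (1 + ‖z‖) := by
      simp only [hδdef]; ring
    have hn1 : (0 : ℝ) < (n : ℝ) - 1 := by
      have : (2 : ℝ) ≤ (n : ℝ) := by exact_mod_cast hn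
      linarith
    have hδp : (0 : ℝ) < δ ^ (n - 1) := by positivity
    have h1z : (0 : ℝ) ≤ (1 + ‖z‖) ^ (n - 1) := by positivity
    calc ‖∫ η in {η : ℂ | 1 ≤ ‖η‖}, ν η / (z - η) ^ (n + 1)‖
          * (1 - (‖z‖) ^ 2) ^ (n - 1)
        ≤ C * (2 * π * ((n : ℝ) - 1)⁻¹ * (δ ^ (n - 1))⁻¹)
          * (1 - (‖z‖) ^ 2) ^ (n - 1) := by
          refine mul_le_mul_of_nonneg_right hmain ?_
          rw [hfac]
          positivity
      _ = C * (2 * π * ((n : ℝ) - 1)⁻¹) * (1 + ‖z‖) ^ (n - 1) := by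
          rw [hfac, mul_pow]
          field_simp
      _ ≤ C * (2 * π * ((n : ℝ) - 1)⁻¹) * 2 ^ (n - 1) := by
          refine mul_le_mul_of_nonneg_left
            (pow_le_pow_left₀ (by positivity) (by linarith) _) ?_
          positivity
      _ ≤ 2 * 4 ^ (n - 1) * π / ((n : ℝ) - 1) * C := by
          rw [div_eq_mul_inv]
          have h24 : (2 : ℝ) ^ (n - 1) ≤ 4 ^ (n - 1) :=
            pow_le_pow_left₀ (by norm_num) (by norm_num) _
          have hinv : (0 : ℝ) < ((n : ℝ) - 1)⁻¹ := inv_pos.2 hn1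
          nlinarith [mul_le_mul_of_nonneg_left h24 (mul_nonneg hC (mul_nonneg (by positivity : (0:ℝ) ≤ 2 * π) hinv.le))]
end
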